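/- High-dimensional Freedman inequality: Let A be a nonempty finite index set. For each a ∈ A let (ξ_{a,i})_{i=1}^n be a square-integrable martingale difference sequence with respect to the filtration (F_i)_{i=0}^n (i.e. each ξ_{a,i} is F_i-measurable, square integrable, and E[ξ_{a,i} | F_{i-1}] = 0 almost surely). Set M_a = Σ_{i=1}^n ξ_{a,i} and V_a = Σ_{i=1}^n E[ξ_{a,i}² | F_{i-1}]. Then for all z, u, v > 0: P( max_{a∈A} |M_a| ≥ z ) ≤ Σ_{i=1}^n P( max_{a∈A} |ξ_{a,i}| ≥ u ) + 2 P( max_{a∈A} V_a ≥ v ) + 2 |A| · exp( − z² / (2zu + 2v) ). -/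

import Mathlib

open MeasureTheory ProbabilityTheory

lemma exp_quad_bound {y b : ℝ} (hyb : y ≤ b) (hb0 : 0 ≤ b) (hb1 : b ≤ 1) :
    Real.exp y ≤ 1 + y + y ^ 2 / 2 * Real.exp b := by
  have heb : (1 : ℝ) ≤ Real.exp b := by
    rw [← Real.exp_zero]; exact Real.exp_le_exp.2 hb0
  rcases le_or_gt y (-1) with h1 | h1
  · have h2 : Real.exp y ≤ Real.exp (-1) := Real.exp_le_exp.2 h1
    have h3 : Real.exp (-1) ≤ 1 / 2 := by
      rw [Real.exp_neg, inv_le_comm₀ (Real.exp_pos 1) (by norm_num)]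
      have := Real.add_one_le_exp (1 : ℝ); linarith
    nlinarith [sq_nonneg (y + 1), sq_nonneg y]
  · rcases le_or_gt y 0 with h2 | h2
    · have hy1 : |y| ≤ 1 := by rw [abs_le]; constructor <;> linarith
      have hb := Real.exp_bound hy1 (n := 4) (by norm_num)
      have hsum : ∑ m ∈ Finset.range 4, y ^ m / m.factorial = 1 + y + y ^ 2 / 2 + y ^ 3 / 6 := by
        norm_num [Finset.sum_range_succ, Nat.factorial]
      rw [hsum] at hb
      have hb' := (abs_le.1 hb).2
      have habs : |y| ^ 4 = y ^ 4 := by rw [abs_of_nonpos h2]; ring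
      rw [habs] at hb'
      push_cast [Nat.factorial] at hb'
      -- exp y ≤ 1 + y + y^2/2 + y^3/6 + y^4*(5/96) and y^3/6 + 5y^4/96 ≤ 0 on [-1,0]
      have hy3 : y ^ 3 * (1 + y) ≤ 0 :=
        mul_nonpos_of_nonpos_of_nonneg (by nlinarith [sq_nonneg y]) (by linarith)
      nlinarith [sq_nonneg y, sq_nonneg (y^2)]
    · have hy1 : |y| ≤ 1 := by rw [abs_le]; constructor <;> linarith
      have hb := Real.exp_bound hy1 (n := 3) (by norm_num)
      have hsum : ∑ m ∈ Finset.range 3, y ^ m / m.factorial = 1 + y + y ^ 2 / 2 := by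
        norm_num [Finset.sum_range_succ, Nat.factorial]
      rw [hsum] at hb
      have hb' := (abs_le.1 hb).2
      rw [abs_of_pos h2] at hb'
      push_cast [Nat.factorial] at hb'
      have hexpb : b + 1 ≤ Real.exp b := Real.add_one_le_exp b
      have h3 : y ^ 3 ≤ y ^ 2 * b := by nlinarith
      nlinarith [sq_nonneg y]

lemma freedman_opt {z u v : ℝ} (hz : 0 < z) (hu : 0 < u) (hv : 0 < v) :
    (z / (z * u + v)) ^ 2 * Real.exp (z / (z * u + v) * u) / 2 * v - z / (z * u + v) * z
      ≤ -z ^ 2 / (2 * z * u + 2 * v) := by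
  have hzuv : 0 < z * u + v := by positivity
  set L := z / (z * u + v) with hL
  have hL0 : 0 < L := by positivity
  have hexp : Real.exp (L * u) ≤ (z * u + v) / v := by
    rw [← Real.exp_log (show (0:ℝ) < (z * u + v) / v by positivity)]
    apply Real.exp_le_exp.2
    have hlog := Real.log_le_sub_one_of_pos (show (0:ℝ) < v / (z * u + v) by positivity)
    rw [show (z * u + v) / v = (v / (z * u + v))⁻¹ by field_simp, Real.log_inv]
    have : L * u = z * u / (z * u + v) := by rw [hL]; ring
    rw [this]
    have hvv : v / (z * u + v) - 1 = -(z * u / (z * u + v)) := by field_simp; ring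
    linarith [hlog.trans_eq hvv]
  have h1 : L ^ 2 * Real.exp (L * u) / 2 * v ≤ L ^ 2 * ((z * u + v) / v) / 2 * v := by
    nlinarith [mul_le_mul_of_nonneg_left hexp (by positivity : (0:ℝ) ≤ L ^ 2 * v / 2)]
  have h2 : L ^ 2 * ((z * u + v) / v) / 2 * v = z ^ 2 / (2 * (z * u + v)) := by
    rw [hL]; field_simp
  have h3 : L * z = z ^ 2 / (z * u + v) := by rw [hL]; field_simp
  have h4 : -z ^ 2 / (2 * z * u + 2 * v) = z ^ 2 / (2 * (z * u + v)) - z ^ 2 / (z * u + v) := by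
    field_simp; ring
  linarith


lemma freedman_single
    {Ω : Type*} {m0 : MeasurableSpace Ω} (μ : Measure Ω) [IsProbabilityMeasure μ]
    (n : ℕ) (ℱ : ℕ → MeasurableSpace Ω) (hmono : Monotone ℱ) (hle : ∀ i, ℱ i ≤ m0)
    (ξ : ℕ → Ω → ℝ)
    (hmeas : ∀ i ∈ Finset.Icc 1 n, StronglyMeasurable[ℱ i] (ξ i))
    (hL2 : ∀ i ∈ Finset.Icc 1 n, MemLp (ξ i) 2 μ)
    (hmds : ∀ i ∈ Finset.Icc 1 n, μ[ξ i | ℱ (i - 1)] =ᵐ[μ] 0)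
    (z u v : ℝ) (hz : 0 < z) (hu : 0 < u) (hv : 0 < v) :
    (μ ({ω | z ≤ ∑ i ∈ Finset.Icc 1 n, ξ i ω} ∩
        {ω | ∀ i ∈ Finset.Icc 1 n, |ξ i ω| ≤ u} ∩
        {ω | ∑ i ∈ Finset.Icc 1 n, (μ[fun ω' => (ξ i ω') ^ 2 | ℱ (i - 1)]) ω ≤ v})).toReal
      ≤ Real.exp (-z ^ 2 / (2 * z * u + 2 * v)) := by
  have hzuv : (0:ℝ) < z * u + v := by positivity
  set L : ℝ := z / (z * u + v) with hLdef
  set c : ℝ := L ^ 2 * Real.exp (L * u) / 2 with hcdef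
  have hL0 : 0 < L := by positivity
  have hc0 : 0 ≤ c := by positivity
  have hLu1 : L * u ≤ 1 := by
    rw [hLdef, div_mul_eq_mul_div, div_le_one hzuv]; nlinarith
  have hLu0 : 0 ≤ L * u := by positivity
  -- truncated increments
  set X : ℕ → Ω → ℝ := fun i ω => if ξ i ω ≤ u then ξ i ω else 0 with hXdef
  set w : ℕ → Ω → ℝ := fun i => μ[fun ω' => (ξ i ω') ^ 2 | ℱ (i - 1)] with hwdef
  set f : ℕ → Ω → ℝ := fun k ω => ∏ i ∈ Finset.Icc 1 k, Real.exp (L * X i ω - c * w i ω)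
    with hfdef
  -- pointwise facts
  have hXle : ∀ i ω, X i ω ≤ u := by
    intro i ω; rw [hXdef]; dsimp only; split_ifs with h
    · exact h
    · exact hu.le
  have hXξ : ∀ i ω, X i ω ≤ ξ i ω := by
    intro i ω; rw [hXdef]; dsimp only; split_ifs with h
    · exact le_refl _
    · push_neg at h; exact le_of_lt (lt_trans hu h)
  have hXsq : ∀ i ω, (X i ω) ^ 2 ≤ (ξ i ω) ^ 2 := by
    intro i ω; rw [hXdef]; dsimp only; split_ifs with h
    · exact le_refl _
    · simpa using sq_nonneg (ξ i ω)
  have hXmeas : ∀ i ∈ Finset.Icc 1 n, Measurable[ℱ i] (X i) := by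
    intro i hi
    exact Measurable.ite (measurableSet_le ((hmeas i hi).measurable) measurable_const)
      ((hmeas i hi).measurable) measurable_const
  have hξint : ∀ i ∈ Finset.Icc 1 n, Integrable (ξ i) μ := fun i hi =>
    (hL2 i hi).integrable (by norm_num)
  have hXint : ∀ i ∈ Finset.Icc 1 n, Integrable (X i) μ := by
    intro i hi
    refine (hξint i hi).mono
      (((hXmeas i hi).mono (hle i) le_rfl).aestronglyMeasurable) ?_
    refine ae_of_all _ fun ω => ?_
    rw [Real.norm_eq_abs, Real.norm_eq_abs, hXdef]; dsimp only; split_ifs with h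
    · exact le_refl _
    · simpa using abs_nonneg (ξ i ω)
  have hsqint : ∀ i ∈ Finset.Icc 1 n, Integrable (fun ω => (ξ i ω) ^ 2) μ := fun i hi =>
    (hL2 i hi).integrable_sq
  have hw0 : ∀ i, 0 ≤ᵐ[μ] w i := fun i =>
    condExp_nonneg (ae_of_all _ fun ω => sq_nonneg _)
  have hgood : ∀ᵐ ω ∂μ, ∀ i ∈ Finset.Icc 1 n, 0 ≤ w i ω := by
    have h := (MeasureTheory.ae_ball_iff (Finset.countable_toSet (Finset.Icc 1 n))).2
      (fun i (_ : i ∈ (Finset.Icc 1 n : Set ℕ)) => hw0 i)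
    filter_upwards [h] with ω hω i hi
    exact hω i (Finset.mem_coe.2 hi)
  have hwmeas : ∀ i, StronglyMeasurable[ℱ (i - 1)] (w i) := fun i =>
    stronglyMeasurable_condExp
  -- measurability of f k
  have hfmeas : ∀ k ≤ n, Measurable[ℱ k] (f k) := by
    intro k hk
    rw [hfdef]
    apply Finset.measurable_prod
    intro i hi
    have hik : i ≤ k := (Finset.mem_Icc.1 hi).2
    have hin : i ∈ Finset.Icc 1 n := Finset.mem_Icc.2 ⟨(Finset.mem_Icc.1 hi).1, hik.trans hk⟩
    apply Measurable.exp
    exact (measurable_const.mul ((hXmeas i hin).mono (hmono hik) le_rfl)).sub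
      (measurable_const.mul (((hwmeas i).measurable).mono (hmono (by omega)) le_rfl))
  have hfnonneg : ∀ k ω, 0 ≤ f k ω := fun k ω =>
    Finset.prod_nonneg fun i _ => (Real.exp_pos _).le
  have hfbound : ∀ k ≤ n, ∀ᵐ ω ∂μ, f k ω ≤ Real.exp (L * u) ^ k := by
    intro k hk
    filter_upwards [hgood] with ω hω
    rw [hfdef]
    dsimp only
    calc ∏ i ∈ Finset.Icc 1 k, Real.exp (L * X i ω - c * w i ω)
        ≤ ∏ i ∈ Finset.Icc 1 k, Real.exp (L * u) := by
          apply Finset.prod_le_prod (fun i _ => (Real.exp_pos _).le)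
          intro i hi
          have hin : i ∈ Finset.Icc 1 n := Finset.mem_Icc.2
            ⟨(Finset.mem_Icc.1 hi).1, (Finset.mem_Icc.1 hi).2.trans hk⟩
          apply Real.exp_le_exp.2
          have h1 : L * X i ω ≤ L * u := mul_le_mul_of_nonneg_left (hXle i ω) hL0.le
          have h2 : 0 ≤ c * w i ω := mul_nonneg hc0 (hω i hin)
          linarith
      _ = Real.exp (L * u) ^ k := by rw [Finset.prod_const, Nat.card_Icc]; norm_num
  have hfint : ∀ k ≤ n, Integrable (f k) μ := by
    intro k hk
    refine Integrable.mono' (integrable_const (Real.exp (L * u) ^ k))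
      (((hfmeas k hk).mono (hle k) le_rfl).aestronglyMeasurable) ?_
    filter_upwards [hfbound k hk] with ω hω
    rw [Real.norm_eq_abs, abs_of_nonneg (hfnonneg k ω)]
    exact hω
  -- conditional moment bound
  have heint : ∀ j ∈ Finset.Icc 1 n, Integrable (fun ω => Real.exp (L * X j ω)) μ := by
    intro j hj
    refine Integrable.mono' (integrable_const (Real.exp (L * u)))
      ((((hXmeas j hj).mono (hle j) le_rfl).const_mul L).exp.aestronglyMeasurable) ?_
    refine ae_of_all _ fun ω => ?_
    rw [Real.norm_eq_abs, abs_of_nonneg (Real.exp_pos _).le]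
    exact Real.exp_le_exp.2 (mul_le_mul_of_nonneg_left (hXle j ω) hL0.le)
  have hcond : ∀ j ∈ Finset.Icc 1 n,
      μ[fun ω => Real.exp (L * X j ω) | ℱ (j - 1)] ≤ᵐ[μ] fun ω => Real.exp (c * w j ω) := by
    intro j hj
    have hptwise : ∀ ω, Real.exp (L * X j ω) ≤ 1 + L * X j ω + c * (ξ j ω) ^ 2 := by
      intro ω
      have h1 := exp_quad_bound (mul_le_mul_of_nonneg_left (hXle j ω) hL0.le) hLu0 hLu1
      have h2 : (L * X j ω) ^ 2 / 2 * Real.exp (L * u) = c * (X j ω) ^ 2 := by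
        rw [hcdef]; ring
      have h3 : c * (X j ω) ^ 2 ≤ c * (ξ j ω) ^ 2 :=
        mul_le_mul_of_nonneg_left (hXsq j ω) hc0
      linarith
    have hg1int : Integrable (fun ω => 1 + L * X j ω + c * (ξ j ω) ^ 2) μ := by
      exact ((integrable_const (1:ℝ)).add ((hXint j hj).const_mul L)).add
        ((hsqint j hj).const_mul c)
    have step1 : μ[fun ω => Real.exp (L * X j ω) | ℱ (j - 1)]
        ≤ᵐ[μ] μ[fun ω => 1 + L * X j ω + c * (ξ j ω) ^ 2 | ℱ (j - 1)] :=
      condExp_mono (heint j hj) hg1int (ae_of_all _ hptwise)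
    have step2 : μ[fun ω => 1 + L * X j ω + c * (ξ j ω) ^ 2 | ℱ (j - 1)]
        ≤ᵐ[μ] fun ω => 1 + c * w j ω := by
      have e1 : μ[(fun ω => 1 + L * X j ω + c * ξ j ω ^ 2) | ℱ (j-1)] =ᵐ[μ]
          μ[(fun ω => 1 + L * X j ω) | ℱ (j-1)] + μ[(fun ω => c * ξ j ω ^ 2) | ℱ (j-1)] :=
        condExp_add (m := ℱ (j-1)) ((integrable_const (1:ℝ)).add ((hXint j hj).const_mul L))
          ((hsqint j hj).const_mul c)
      have e2 : μ[(fun ω => 1 + L * X j ω) | ℱ (j-1)] =ᵐ[μ]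
          μ[(fun _ : Ω => (1:ℝ)) | ℱ (j-1)] + μ[(fun ω => L * X j ω) | ℱ (j-1)] :=
        condExp_add (m := ℱ (j-1)) (integrable_const (1:ℝ)) ((hXint j hj).const_mul L)
      have e3 : μ[(fun ω => L * X j ω) | ℱ (j-1)] =ᵐ[μ]
          fun ω => L * (μ[X j | ℱ (j-1)]) ω := condExp_smul L (X j) (ℱ (j-1))
      have e4 : μ[(fun ω => c * ξ j ω ^ 2) | ℱ (j-1)] =ᵐ[μ]
          fun ω => c * (μ[(fun ω' => ξ j ω' ^ 2) | ℱ (j-1)]) ω :=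
        condExp_smul c (fun ω' => ξ j ω' ^ 2) (ℱ (j-1))
      have e5 : μ[X j | ℱ (j - 1)] ≤ᵐ[μ] 0 :=
        (condExp_mono (m := ℱ (j-1)) (hXint j hj) (hξint j hj)
          (ae_of_all _ (hXξ j))).trans (hmds j hj).le
      have e6 : μ[(fun _ : Ω => (1:ℝ)) | ℱ (j-1)] = fun _ => (1:ℝ) :=
        condExp_const (hle (j-1)) (1:ℝ)
      have hwj : (μ[(fun ω' => ξ j ω' ^ 2) | ℱ (j-1)]) = w j := by rw [hwdef]
      filter_upwards [e1, e2, e3, e4, e5, hw0 j] with ω h1 h2 h3 h4 h5 h6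
      rw [h1]
      simp only [Pi.add_apply, e6, h2, h3, h4, hwj]
      have h5' : (μ[X j | ℱ (j-1)]) ω ≤ 0 := h5
      have : L * (μ[X j | ℱ (j-1)]) ω ≤ 0 := mul_nonpos_of_nonneg_of_nonpos hL0.le h5'
      linarith
    have step3 : (fun ω => 1 + c * w j ω) ≤ᵐ[μ] fun ω => Real.exp (c * w j ω) := by
      refine ae_of_all _ fun ω => ?_
      dsimp only
      have := Real.add_one_le_exp (c * w j ω)
      linarith
    exact (step1.trans step2).trans step3
  -- supermartingale property by induction
  have key : ∀ k, k ≤ n → ∫ ω, f k ω ∂μ ≤ 1 := by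
    intro k
    induction k with
    | zero =>
      intro _
      have h0 : f 0 = fun _ => 1 := by funext ω; rw [hfdef]; simp
      rw [h0]
      simp
    | succ k ih =>
      intro hk1
      have hk : k ≤ n := Nat.le_of_succ_le hk1
      have hj : k + 1 ∈ Finset.Icc 1 n := Finset.mem_Icc.2 ⟨Nat.succ_le_succ (Nat.zero_le k), hk1⟩
      have hIcc : Finset.Icc 1 (k+1) = insert (k+1) (Finset.Icc 1 k) := by
        ext x; simp only [Finset.mem_Icc, Finset.mem_insert]; omega
      set h : Ω → ℝ := fun ω => f k ω * Real.exp (-(c * w (k+1) ω)) with hhdef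
      have hsplitf : f (k + 1) = fun ω => h ω * Real.exp (L * X (k+1) ω) := by
        funext ω
        rw [hfdef, hhdef]
        dsimp only
        rw [hIcc, Finset.prod_insert (by simp), hfdef]
        dsimp only
        rw [sub_eq_add_neg, Real.exp_add]
        ring
      have hhmeas : StronglyMeasurable[ℱ k] h := by
        apply Measurable.stronglyMeasurable
        exact (hfmeas k hk).mul
          (((((hwmeas (k+1)).measurable).const_mul c).neg).exp)
      have hhnonneg : ∀ ω, 0 ≤ h ω := fun ω =>
        mul_nonneg (hfnonneg k ω) (Real.exp_pos _).le
      have hint2 : Integrable (fun ω => h ω * Real.exp (L * X (k+1) ω)) μ := by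
        rw [← hsplitf]; exact hfint (k+1) hk1
      have hcnd : μ[fun ω => Real.exp (L * X (k+1) ω) | ℱ k]
          ≤ᵐ[μ] fun ω => Real.exp (c * w (k+1) ω) := hcond (k+1) hj
      have hmul : μ[fun ω => h ω * Real.exp (L * X (k+1) ω) | ℱ k]
          =ᵐ[μ] fun ω => h ω * (μ[fun ω => Real.exp (L * X (k+1) ω) | ℱ k]) ω :=
        condExp_mul_of_stronglyMeasurable_left hhmeas hint2 (heint (k+1) hj)
      have hbnd : μ[fun ω => h ω * Real.exp (L * X (k+1) ω) | ℱ k] ≤ᵐ[μ] f k := by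
        filter_upwards [hmul, hcnd] with ω h1 h2
        rw [h1]
        calc h ω * (μ[fun ω => Real.exp (L * X (k+1) ω) | ℱ k]) ω
            ≤ h ω * Real.exp (c * w (k+1) ω) :=
              mul_le_mul_of_nonneg_left h2 (hhnonneg ω)
          _ = f k ω := by
              rw [hhdef]
              dsimp only
              rw [mul_assoc, ← Real.exp_add]
              simp
      calc ∫ ω, f (k+1) ω ∂μ
          = ∫ ω, h ω * Real.exp (L * X (k+1) ω) ∂μ := by rw [hsplitf]
        _ = ∫ ω, (μ[fun ω => h ω * Real.exp (L * X (k+1) ω) | ℱ k]) ω ∂μ :=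
            (integral_condExp (hle k)).symm
        _ ≤ ∫ ω, f k ω ∂μ := integral_mono_ae integrable_condExp (hfint k hk) hbnd
        _ ≤ 1 := ih hk
  -- Markov / Chernoff step
  set S : Set Ω := {ω | z ≤ ∑ i ∈ Finset.Icc 1 n, ξ i ω} ∩
      {ω | ∀ i ∈ Finset.Icc 1 n, |ξ i ω| ≤ u} ∩
      {ω | ∑ i ∈ Finset.Icc 1 n, (μ[fun ω' => (ξ i ω') ^ 2 | ℱ (i - 1)]) ω ≤ v} with hSdef
  have hSmeas : MeasurableSet S := by
    rw [hSdef]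
    apply MeasurableSet.inter
    apply MeasurableSet.inter
    · exact measurableSet_le measurable_const
        (Finset.measurable_sum _ fun i hi => (hmeas i hi).measurable.mono (hle i) le_rfl)
    · have : {ω | ∀ i ∈ Finset.Icc 1 n, |ξ i ω| ≤ u}
          = ⋂ i ∈ Finset.Icc 1 n, {ω | |ξ i ω| ≤ u} := by ext ω; simp
      rw [this]
      exact MeasurableSet.biInter (Finset.Icc 1 n).countable_toSet fun i hi =>
        measurableSet_le (((hmeas i hi).measurable.mono (hle i) le_rfl).abs) measurable_const
    · exact measurableSet_le
        (Finset.measurable_sum _ fun i hi => ((hwmeas i).measurable.mono (hle (i-1)) le_rfl))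
        measurable_const
  have hSlow : ∀ ω ∈ S, Real.exp (L * z - c * v) ≤ f n ω := by
    rintro ω ⟨⟨h1, h2⟩, h3⟩
    have hXeq : ∀ i ∈ Finset.Icc 1 n, X i ω = ξ i ω := by
      intro i hi
      rw [hXdef]
      exact if_pos ((le_abs_self _).trans (h2 i hi))
    have hfn : f n ω = Real.exp (∑ i ∈ Finset.Icc 1 n, (L * X i ω - c * w i ω)) := by
      rw [hfdef, Real.exp_sum]
    rw [hfn]
    apply Real.exp_le_exp.2
    have hsum : ∑ i ∈ Finset.Icc 1 n, (L * X i ω - c * w i ω)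
        = L * (∑ i ∈ Finset.Icc 1 n, ξ i ω) - c * (∑ i ∈ Finset.Icc 1 n, w i ω) := by
      rw [Finset.sum_sub_distrib, ← Finset.mul_sum, ← Finset.mul_sum]
      congr 1
      apply congrArg
      exact Finset.sum_congr rfl hXeq
    rw [hsum]
    have hA : L * z ≤ L * ∑ i ∈ Finset.Icc 1 n, ξ i ω :=
      mul_le_mul_of_nonneg_left h1 hL0.le
    have hB : c * (∑ i ∈ Finset.Icc 1 n, w i ω) ≤ c * v :=
      mul_le_mul_of_nonneg_left h3 hc0
    linarith
  have hmarkov : Real.exp (L * z - c * v) * (μ S).toReal ≤ 1 := by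
    calc Real.exp (L * z - c * v) * (μ S).toReal
        = ∫ _ω in S, Real.exp (L * z - c * v) ∂μ := by
          rw [setIntegral_const]; rw [smul_eq_mul]; simp only [Measure.real]; ring
      _ ≤ ∫ ω in S, f n ω ∂μ :=
          setIntegral_mono_on (integrable_const _).integrableOn
            ((hfint n le_rfl).integrableOn) hSmeas hSlow
      _ ≤ ∫ ω, f n ω ∂μ := setIntegral_le_integral (hfint n le_rfl)
            (ae_of_all _ (hfnonneg n))
      _ ≤ 1 := key n le_rfl
  have hfinal : (μ S).toReal ≤ Real.exp (c * v - L * z) := by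
    have hpos : 0 < Real.exp (L * z - c * v) := Real.exp_pos _
    rw [← le_div_iff₀' hpos] at hmarkov
    calc (μ S).toReal ≤ 1 / Real.exp (L * z - c * v) := hmarkov
      _ = Real.exp (c * v - L * z) := by
          rw [one_div, ← Real.exp_neg]; ring_nf
  refine hfinal.trans (Real.exp_le_exp.2 ?_)
  have hopt := freedman_opt hz hu hv
  rw [← hLdef] at hopt
  calc c * v - L * z = L ^ 2 * Real.exp (L * u) / 2 * v - L * z := by rw [hcdef]
    _ ≤ -z ^ 2 / (2 * z * u + 2 * v) := hopt


/-- High-dimensional Freedman inequality for martingale difference sequences. -/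
theorem freedman_highdim
    {Ω : Type*} {m0 : MeasurableSpace Ω} (μ : Measure Ω) [IsProbabilityMeasure μ]
    (n : ℕ) (ℱ : ℕ → MeasurableSpace Ω) (hmono : Monotone ℱ) (hle : ∀ i, ℱ i ≤ m0)
    {ι : Type*} (A : Finset ι) (hA : A.Nonempty)
    (ξ : ι → ℕ → Ω → ℝ)
    (hmeas : ∀ a ∈ A, ∀ i ∈ Finset.Icc 1 n, StronglyMeasurable[ℱ i] (ξ a i))
    (hL2 : ∀ a ∈ A, ∀ i ∈ Finset.Icc 1 n, MemLp (ξ a i) 2 μ)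
    (hmds : ∀ a ∈ A, ∀ i ∈ Finset.Icc 1 n, μ[ξ a i | ℱ (i - 1)] =ᵐ[μ] 0)
    (M V : ι → Ω → ℝ)
    (hM : ∀ a, M a = fun ω => ∑ i ∈ Finset.Icc 1 n, ξ a i ω)
    (hV : ∀ a, V a = fun ω => ∑ i ∈ Finset.Icc 1 n,
      (μ[fun ω' => (ξ a i ω') ^ 2 | ℱ (i - 1)]) ω)
    (z u v : ℝ) (hz : 0 < z) (hu : 0 < u) (hv : 0 < v) :
    (μ {ω | z ≤ A.sup' hA fun a => |M a ω|}).toReal ≤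
      (∑ i ∈ Finset.Icc 1 n, (μ {ω | u ≤ A.sup' hA fun a => |ξ a i ω|}).toReal)
        + 2 * (μ {ω | v ≤ A.sup' hA fun a => V a ω}).toReal
        + 2 * (A.card : ℝ) * Real.exp (-z ^ 2 / (2 * z * u + 2 * v)) := by
  set E : ℝ := Real.exp (-z ^ 2 / (2 * z * u + 2 * v)) with hE
  have hE0 : 0 < E := Real.exp_pos _
  set T : Set Ω := {ω | z ≤ A.sup' hA fun a => |M a ω|} with hT
  set U : ℕ → Set Ω := fun i => {ω | u ≤ A.sup' hA fun a => |ξ a i ω|} with hU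
  set W : Set Ω := {ω | v ≤ A.sup' hA fun a => V a ω} with hW
  set Sp : ι → Set Ω := fun a => {ω | z ≤ ∑ i ∈ Finset.Icc 1 n, ξ a i ω} ∩
      {ω | ∀ i ∈ Finset.Icc 1 n, |ξ a i ω| ≤ u} ∩
      {ω | ∑ i ∈ Finset.Icc 1 n, (μ[fun ω' => (ξ a i ω') ^ 2 | ℱ (i - 1)]) ω ≤ v} with hSp
  set Sm : ι → Set Ω := fun a => {ω | z ≤ ∑ i ∈ Finset.Icc 1 n, -ξ a i ω} ∩
      {ω | ∀ i ∈ Finset.Icc 1 n, |-ξ a i ω| ≤ u} ∩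
      {ω | ∑ i ∈ Finset.Icc 1 n, (μ[fun ω' => (-ξ a i ω') ^ 2 | ℱ (i - 1)]) ω ≤ v} with hSm
  have hVeq : ∀ a, ∀ i : ℕ, (μ[fun ω' => (-ξ a i ω') ^ 2 | ℱ (i - 1)])
      = (μ[fun ω' => (ξ a i ω') ^ 2 | ℱ (i - 1)]) := by
    intro a i; congr 1; funext ω'; ring
  -- one-dimensional bounds
  have hone : ∀ a ∈ A, (μ (Sp a)).toReal ≤ E := fun a ha =>
    freedman_single μ n ℱ hmono hle (ξ a) (hmeas a ha) (hL2 a ha) (hmds a ha) z u v hz hu hv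
  have htwo : ∀ a ∈ A, (μ (Sm a)).toReal ≤ E := by
    intro a ha
    have hmds' : ∀ i ∈ Finset.Icc 1 n, μ[(fun ω => -ξ a i ω) | ℱ (i - 1)] =ᵐ[μ] 0 := by
      intro i hi
      have h1 : μ[(fun ω => -ξ a i ω) | ℱ (i - 1)] =ᵐ[μ] -μ[ξ a i | ℱ (i - 1)] :=
        condExp_neg (ξ a i) (ℱ (i - 1))
      filter_upwards [h1, hmds a ha i hi] with ω e1 e2
      rw [e1]
      simp only [Pi.neg_apply, e2, Pi.zero_apply, neg_zero]
    exact freedman_single μ n ℱ hmono hle (fun i ω => -ξ a i ω)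
      (fun i hi => (hmeas a ha i hi).neg) (fun i hi => (hL2 a ha i hi).neg)
      hmds' z u v hz hu hv
  -- set inclusion
  have hsub : T ⊆ (⋃ i ∈ Finset.Icc 1 n, U i) ∪ (W ∪ ⋃ a ∈ A, Sp a ∪ Sm a) := by
    intro ω hω
    by_cases hUc : ∃ i ∈ Finset.Icc 1 n, ω ∈ U i
    · obtain ⟨i, hi, hωi⟩ := hUc
      exact Set.mem_union_left _ (Set.mem_biUnion hi hωi)
    right
    by_cases hWc : ω ∈ W
    · exact Set.mem_union_left _ hWc
    right
    push_neg at hUc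
    obtain ⟨a, ha, hsup⟩ := Finset.exists_mem_eq_sup' hA (fun a => |M a ω|)
    have hzM : z ≤ |M a ω| := by
      have : z ≤ A.sup' hA fun a => |M a ω| := hω
      rwa [hsup] at this
    have hξb : ∀ i ∈ Finset.Icc 1 n, |ξ a i ω| ≤ u := by
      intro i hi
      have h1 : ¬ u ≤ A.sup' hA fun b => |ξ b i ω| := hUc i hi
      push_neg at h1
      exact ((Finset.le_sup' (fun b => |ξ b i ω|) ha).trans h1.le)
    have hVb : ∑ i ∈ Finset.Icc 1 n, (μ[fun ω' => (ξ a i ω') ^ 2 | ℱ (i - 1)]) ω ≤ v := by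
      have h1 : ¬ v ≤ A.sup' hA fun b => V b ω := hWc
      push_neg at h1
      have h2 : V a ω ≤ A.sup' hA fun b => V b ω := Finset.le_sup' (fun b => V b ω) ha
      have h3 : V a ω = ∑ i ∈ Finset.Icc 1 n, (μ[fun ω' => (ξ a i ω') ^ 2 | ℱ (i - 1)]) ω := by
        rw [hV a]
      linarith
    refine Set.mem_biUnion ha ?_
    have hMa : M a ω = ∑ i ∈ Finset.Icc 1 n, ξ a i ω := by rw [hM a]
    rcases le_abs.1 hzM with hpos | hneg
    · left
      refine ⟨⟨?_, hξb⟩, hVb⟩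
      show z ≤ ∑ i ∈ Finset.Icc 1 n, ξ a i ω
      linarith [hMa.le, hMa.ge]
    · right
      refine ⟨⟨?_, ?_⟩, ?_⟩
      · show z ≤ ∑ i ∈ Finset.Icc 1 n, -ξ a i ω
        have h5 : ∑ i ∈ Finset.Icc 1 n, -ξ a i ω = -∑ i ∈ Finset.Icc 1 n, ξ a i ω := by
          rw [Finset.sum_neg_distrib]
        linarith [hMa.le, hMa.ge]
      · show ∀ i ∈ Finset.Icc 1 n, |-ξ a i ω| ≤ u
        intro i hi
        simpa using hξb i hi
      · show ∑ i ∈ Finset.Icc 1 n, (μ[fun ω' => (-ξ a i ω') ^ 2 | ℱ (i - 1)]) ω ≤ v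
        simpa only [hVeq a] using hVb
  -- measure arithmetic
  have hmeasure : μ T ≤ (∑ i ∈ Finset.Icc 1 n, μ (U i))
      + (μ W + ∑ a ∈ A, (μ (Sp a) + μ (Sm a))) := by
    refine (measure_mono hsub).trans ?_
    refine (measure_union_le _ _).trans (add_le_add (measure_biUnion_finset_le _ _) ?_)
    refine (measure_union_le _ _).trans (add_le_add_right ?_ _)
    exact (measure_biUnion_finset_le _ _).trans
      (Finset.sum_le_sum fun a _ => measure_union_le _ _)
  have hne1 : (∑ i ∈ Finset.Icc 1 n, μ (U i)) ≠ ⊤ :=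
    (ENNReal.sum_lt_top.2 fun i _ => measure_lt_top μ _).ne
  have hne2 : (∑ a ∈ A, (μ (Sp a) + μ (Sm a))) ≠ ⊤ :=
    (ENNReal.sum_lt_top.2 fun a _ =>
      ENNReal.add_lt_top.2 ⟨measure_lt_top μ _, measure_lt_top μ _⟩).ne
  have hne3 : μ W + ∑ a ∈ A, (μ (Sp a) + μ (Sm a)) ≠ ⊤ :=
    (ENNReal.add_lt_top.2 ⟨measure_lt_top μ _, hne2.lt_top⟩).ne
  have hstep : (μ T).toReal ≤ (∑ i ∈ Finset.Icc 1 n, (μ (U i)).toReal)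
      + ((μ W).toReal + ∑ a ∈ A, ((μ (Sp a)).toReal + (μ (Sm a)).toReal)) := by
    have h1 := ENNReal.toReal_mono (by
      exact (ENNReal.add_lt_top.2 ⟨hne1.lt_top, hne3.lt_top⟩).ne) hmeasure
    rw [ENNReal.toReal_add hne1 hne3,
      ENNReal.toReal_add (measure_ne_top μ W) hne2] at h1
    have h2 : (∑ i ∈ Finset.Icc 1 n, μ (U i)).toReal
        = ∑ i ∈ Finset.Icc 1 n, (μ (U i)).toReal :=
      ENNReal.toReal_sum fun i _ => measure_ne_top μ _
    have h3 : (∑ a ∈ A, (μ (Sp a) + μ (Sm a))).toReal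
        = ∑ a ∈ A, ((μ (Sp a)).toReal + (μ (Sm a)).toReal) := by
      rw [ENNReal.toReal_sum fun a _ => (ENNReal.add_lt_top.2
        ⟨measure_lt_top μ _, measure_lt_top μ _⟩).ne]
      exact Finset.sum_congr rfl fun a _ =>
        ENNReal.toReal_add (measure_ne_top μ _) (measure_ne_top μ _)
    rw [h2, h3] at h1
    exact h1
  have hsum2 : ∑ a ∈ A, ((μ (Sp a)).toReal + (μ (Sm a)).toReal) ≤ (A.card : ℝ) * (2 * E) := by
    calc ∑ a ∈ A, ((μ (Sp a)).toReal + (μ (Sm a)).toReal)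
        ≤ ∑ _a ∈ A, (2 * E) := Finset.sum_le_sum fun a ha => by
          have := hone a ha; have := htwo a ha; linarith
      _ = (A.card : ℝ) * (2 * E) := by rw [Finset.sum_const, nsmul_eq_mul]
  have hWpos : 0 ≤ (μ W).toReal := ENNReal.toReal_nonneg
  have hcard : (A.card : ℝ) * (2 * E) = 2 * (A.card : ℝ) * E := by ring
  linarith [hstep, hsum2]
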